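/- Fix α ∈ (0,1) and let F be a class of distribution functions on ℝ having unique α-quantiles. Let g : ℝ → ℝ be strictly increasing and F-integrable. Then S(x,y) := (1_{y ≤ x} − α)(g(x) − g(y)) is a strictly F-consistent scoring function for the quantile functional T(F) := F^←(α); in particular the α-quantile is elicitable. -/

import Mathlib

open MeasureTheory

/-- The lower quantile function of a measure on `ℝ`. -/
noncomputable def lowerQuantile (F : Measure ℝ) (α : ℝ) : ℝ :=
  sInf {x : ℝ | α ≤ (F (Set.Iic x)).toReal}

/-- The upper quantile function of a measure on `ℝ`. -/
noncomputable def upperQuantile (F : Measure ℝ) (α : ℝ) : ℝ :=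
  sInf {x : ℝ | α < (F (Set.Iic x)).toReal}

open Set Filter Topology

section aux
variable (F : Measure ℝ) [IsProbabilityMeasure F] {α : ℝ}

lemma cmono : Monotone fun x : ℝ => (F (Iic x)).toReal := fun a b hab => by
  have := measure_mono (μ := F) (Iic_subset_Iic.2 hab)
  exact ENNReal.toReal_mono (measure_ne_top _ _) this

lemma tendsto_c_atTop : Tendsto (fun n : ℕ => (F (Iic (n:ℝ))).toReal) atTop (𝓝 1) := by
  have h1 : (⋃ n : ℕ, Iic ((n:ℝ))) = univ := by
    ext x; simp only [mem_iUnion, mem_Iic, mem_univ, iff_true]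
    exact (exists_nat_ge x)
  have := tendsto_measure_iUnion_atTop (μ := F) (s := fun n : ℕ => Iic ((n:ℝ)))
    (fun a b hab => Iic_subset_Iic.2 (by exact_mod_cast hab))
  rw [h1, measure_univ] at this
  have := (ENNReal.tendsto_toReal (by simp)).comp this
  simpa [Function.comp_def] using this

lemma tendsto_c_atBot : Tendsto (fun n : ℕ => (F (Iic (-(n:ℝ)))).toReal) atTop (𝓝 0) := by
  have h1 : (⋂ n : ℕ, Iic (-(n:ℝ))) = ∅ := by
    ext x; simp only [mem_iInter, mem_Iic, mem_empty_iff_false, iff_false, not_forall]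
    obtain ⟨n, hn⟩ := exists_nat_gt (-x)
    exact ⟨n, by push_neg; linarith⟩
  have := tendsto_measure_iInter_atTop (μ := F) (s := fun n : ℕ => Iic (-(n:ℝ)))
    (fun n => measurableSet_Iic.nullMeasurableSet)
    (fun a b hab => Iic_subset_Iic.2 (by simp; exact_mod_cast hab))
    ⟨0, measure_ne_top _ _⟩
  rw [h1, measure_empty] at this
  have := (ENNReal.tendsto_toReal (by simp)).comp this
  simpa [Function.comp_def] using this

end aux

section quant
variable {F : Measure ℝ} [IsProbabilityMeasure F] {α : ℝ}

lemma Snonempty (hα1 : α < 1) : {x : ℝ | α ≤ (F (Iic x)).toReal}.Nonempty := by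
  have := (tendsto_c_atTop F).eventually_const_lt hα1
  obtain ⟨n, hn⟩ := this.exists
  exact ⟨n, le_of_lt hn⟩

lemma S'nonempty (hα1 : α < 1) : {x : ℝ | α < (F (Iic x)).toReal}.Nonempty := by
  have := (tendsto_c_atTop F).eventually_const_lt hα1
  obtain ⟨n, hn⟩ := this.exists
  exact ⟨n, hn⟩

lemma Sbdd (hα0 : 0 < α) : BddBelow {x : ℝ | α ≤ (F (Iic x)).toReal} := by
  have := (tendsto_c_atBot F).eventually_lt_const hα0
  obtain ⟨n, hn⟩ := this.exists
  refine ⟨-(n:ℝ), fun x hx => ?_⟩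
  by_contra h
  push_neg at h
  have := cmono F h.le
  simp only [mem_setOf_eq] at hx
  linarith

lemma alpha_le_c_lowerQuantile (hα : α ∈ Ioo (0:ℝ) 1) :
    α ≤ (F (Iic (lowerQuantile F α))).toReal := by
  set t := lowerQuantile F α with ht
  have hIic : (⋂ n : ℕ, Iic (t + 1/(n+1))) = Iic t := by
    ext x
    simp only [mem_iInter, mem_Iic]
    constructor
    · intro h
      by_contra hx
      push_neg at hx
      obtain ⟨n, hn⟩ := exists_nat_one_div_lt (sub_pos.2 hx)
      have := h n
      linarith
    · intro h n
      have : (0:ℝ) < 1/(n+1) := by positivity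
      linarith
  have htend := tendsto_measure_iInter_atTop (μ := F) (s := fun n : ℕ => Iic (t + 1/(n+1)))
    (fun n => measurableSet_Iic.nullMeasurableSet)
    (fun a b hab => Iic_subset_Iic.2 (by
      have : (1:ℝ)/(b+1) ≤ 1/(a+1) := by
        apply one_div_le_one_div_of_le (by positivity)
        have : (a:ℝ) ≤ b := Nat.cast_le.2 hab
        linarith
      linarith))
    ⟨0, measure_ne_top _ _⟩
  rw [hIic] at htend
  have htend' := (ENNReal.tendsto_toReal (measure_ne_top F _)).comp htend
  refine ge_of_tendsto htend' (Eventually.of_forall fun n => ?_)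
  have hlt : t < t + 1/(n+1) := by
    have : (0:ℝ) < 1/(n+1) := by positivity
    linarith
  obtain ⟨s, hs, hs'⟩ := (csInf_lt_iff (Sbdd hα.1) (Snonempty hα.2)).1 hlt
  exact le_trans hs (cmono F hs'.le)

lemma c_lt_alpha_of_lt (hα : α ∈ Ioo (0:ℝ) 1) {s : ℝ} (hs : s < lowerQuantile F α) :
    (F (Iic s)).toReal < α := by
  by_contra h
  push_neg at h
  exact absurd (csInf_le (Sbdd hα.1) h) (not_le.2 hs)

lemma c_Iio_le_alpha (hα : α ∈ Ioo (0:ℝ) 1) :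
    (F (Iio (lowerQuantile F α))).toReal ≤ α := by
  set t := lowerQuantile F α with ht
  have hIio : (⋃ n : ℕ, Iic (t - 1/(n+1))) = Iio t := by
    ext x
    simp only [mem_iUnion, mem_Iic, mem_Iio]
    constructor
    · rintro ⟨n, hn⟩
      have : (0:ℝ) < 1/(n+1) := by positivity
      linarith
    · intro h
      obtain ⟨n, hn⟩ := exists_nat_one_div_lt (sub_pos.2 h)
      exact ⟨n, by linarith⟩
  have htend := tendsto_measure_iUnion_atTop (μ := F) (s := fun n : ℕ => Iic (t - 1/(n+1)))
    (fun a b hab => Iic_subset_Iic.2 (by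
      have : (1:ℝ)/(b+1) ≤ 1/(a+1) := by
        apply one_div_le_one_div_of_le (by positivity)
        have : (a:ℝ) ≤ b := Nat.cast_le.2 hab
        linarith
      linarith))
  rw [hIio] at htend
  have htend' := (ENNReal.tendsto_toReal (measure_ne_top F _)).comp htend
  refine le_of_tendsto htend' (Eventually.of_forall fun n => ?_)
  refine (c_lt_alpha_of_lt hα ?_).le
  have : (0:ℝ) < 1/(n+1) := by positivity
  linarith

lemma alpha_lt_c_of_gt (hα : α ∈ Ioo (0:ℝ) 1)
    (huniq : lowerQuantile F α = upperQuantile F α) {s : ℝ}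
    (hs : lowerQuantile F α < s) : α < (F (Iic s)).toReal := by
  rw [huniq] at hs
  have hbdd : BddBelow {x : ℝ | α < (F (Iic x)).toReal} := by
    obtain ⟨z, hz⟩ := Sbdd (F := F) hα.1
    exact ⟨z, fun x hx => hz (mem_setOf_eq ▸ le_of_lt hx)⟩
  obtain ⟨m, hm, hm'⟩ := (csInf_lt_iff hbdd (S'nonempty hα.2)).1 hs
  exact lt_of_lt_of_le hm (cmono F hm'.le)

end quant

section integral
variable {F : Measure ℝ} [IsProbabilityMeasure F] {g : ℝ → ℝ} {α : ℝ}

lemma measure_toReal_union {s u : Set ℝ} (hd : Disjoint s u) (hu : MeasurableSet u) :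
    (F (s ∪ u)).toReal = (F s).toReal + (F u).toReal := by
  rw [measure_union hd hu, ENNReal.toReal_add (measure_ne_top _ _) (measure_ne_top _ _)]

lemma int_split (hgint : Integrable g F) {s u : Set ℝ} (hd : Disjoint s u)
    (hu : MeasurableSet u) :
    ∫ y in s ∪ u, g y ∂F = (∫ y in s, g y ∂F) + ∫ y in u, g y ∂F :=
  setIntegral_union hd hu hgint.integrableOn hgint.integrableOn

lemma int_le_const (hgint : Integrable g F) {s : Set ℝ} (hs : MeasurableSet s) {c : ℝ}
    (hb : ∀ y ∈ s, g y ≤ c) : ∫ y in s, g y ∂F ≤ c * (F s).toReal := by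
  have h := setIntegral_mono_on hgint.integrableOn
    (integrableOn_const (measure_ne_top F s)) hs hb
  rwa [setIntegral_const, measureReal_def, smul_eq_mul, mul_comm] at h

lemma const_le_int (hgint : Integrable g F) {s : Set ℝ} (hs : MeasurableSet s) {c : ℝ}
    (hb : ∀ y ∈ s, c ≤ g y) : c * (F s).toReal ≤ ∫ y in s, g y ∂F := by
  have h := setIntegral_mono_on
    (integrableOn_const (measure_ne_top F s)) hgint.integrableOn hs hb
  rwa [setIntegral_const, measureReal_def, smul_eq_mul, mul_comm] at h

lemma int_singleton (hgint : Integrable g F) (t : ℝ) :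
    ∫ y in ({t} : Set ℝ), g y ∂F = g t * (F {t}).toReal := by
  have : ∫ y in ({t} : Set ℝ), g y ∂F = ∫ _ in ({t} : Set ℝ), g t ∂F :=
    setIntegral_congr_fun (measurableSet_singleton t) (fun y hy => by
      simp only [mem_singleton_iff] at hy; rw [hy])
  rw [this, setIntegral_const, measureReal_def, smul_eq_mul, mul_comm]

/-- Closed form for the score integral. -/
lemma score_eq (hgint : Integrable g F) (x : ℝ) :
    ∫ y, ((if y ≤ x then (1:ℝ) else 0) - α) * (g x - g y) ∂F
      = (F (Iic x)).toReal * g x - (∫ y in Iic x, g y ∂F) - α * g x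
          + α * (∫ y, g y ∂F) := by
  have hfun : (fun y => ((if y ≤ x then (1:ℝ) else 0) - α) * (g x - g y))
      = fun y => Set.indicator (Iic x) (fun z => g x - g z) y - α * (g x - g y) := by
    funext y
    by_cases h : y ≤ x <;> simp [Set.indicator, h, mem_Iic] <;> ring
  have hint1 : IntegrableOn (fun z => g x - g z) (Iic x) F :=
    (integrableOn_const (measure_ne_top F _)).sub hgint.integrableOn
  have hint1' : Integrable (Set.indicator (Iic x) (fun z => g x - g z)) F :=
    hint1.integrable_indicator measurableSet_Iic
  have hint2 : Integrable (fun y => α * (g x - g y)) F :=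
    (((integrable_const (g x)).sub hgint).const_mul α)
  rw [hfun, integral_sub hint1' hint2, integral_indicator measurableSet_Iic]
  have h1 : ∫ y in Iic x, (g x - g y) ∂F
      = (F (Iic x)).toReal * g x - ∫ y in Iic x, g y ∂F := by
    rw [integral_sub (integrableOn_const (measure_ne_top F _) : IntegrableOn (fun _ => g x) (Iic x) F) hgint.integrableOn,
      setIntegral_const, measureReal_def, smul_eq_mul, mul_comm]
  have h2 : ∫ y, α * (g x - g y) ∂F = α * (g x - ∫ y, g y ∂F) := by
    rw [integral_const_mul, integral_sub (integrable_const (g x)) hgint, integral_const]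
    simp
  rw [h1, h2]
  ring

end integral

section key
variable {F : Measure ℝ} [IsProbabilityMeasure F] {g : ℝ → ℝ} {α : ℝ}

lemma score_lt (hα : α ∈ Ioo (0:ℝ) 1)
    (huniq : lowerQuantile F α = upperQuantile F α)
    (hg : StrictMono g) (hgint : Integrable g F) {x : ℝ}
    (hx : x ≠ lowerQuantile F α) :
    ∫ y, ((if y ≤ lowerQuantile F α then (1:ℝ) else 0) - α) *
        (g (lowerQuantile F α) - g y) ∂F
      < ∫ y, ((if y ≤ x then (1:ℝ) else 0) - α) * (g x - g y) ∂F := by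
  set t := lowerQuantile F α with htdef
  rw [score_eq hgint, score_eq hgint]
  have hct : α ≤ (F (Iic t)).toReal := alpha_le_c_lowerQuantile hα
  rcases lt_or_gt_of_ne hx with hlt | hgt
  · -- x < t
    have hsplit : (∫ y in Iic t, g y ∂F)
        = (∫ y in Iic x, g y ∂F) + ∫ y in Ioc x t, g y ∂F := by
      rw [← int_split hgint (Iic_disjoint_Ioc le_rfl) measurableSet_Ioc,
        Iic_union_Ioc_eq_Iic hlt.le]
    rw [hsplit]
    have hβα : (F (Iio t)).toReal ≤ α := c_Iio_le_alpha hα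
    have hsplit2 : (∫ y in Ioc x t, g y ∂F)
        = (∫ y in Ioo x t, g y ∂F) + g t * (F {t}).toReal := by
      rw [← int_singleton hgint t,
        ← int_split hgint (by
          exact Set.disjoint_singleton_right.2 (by simp))
          (measurableSet_singleton t),
        Ioo_union_right hlt]
    have hatom : (F (Iic t)).toReal = (F (Iio t)).toReal + (F {t}).toReal := by
      have hu : Iio t ∪ {t} = Iic t := Iio_union_right
      rw [← hu, measure_toReal_union (F := F) (s := Iio t) (u := {t}) (by
        exact Set.disjoint_singleton_right.2 (by simp))
        (measurableSet_singleton t)]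
    have hIoo : (F (Ioo x t)).toReal = (F (Iio t)).toReal - (F (Iic x)).toReal := by
      have h := measure_toReal_union (F := F) (s := Iic x) (u := Ioo x t) (by
        rw [Set.disjoint_left]; rintro a ha ha2; exact absurd ha2.1 (not_lt.2 ha))
        measurableSet_Ioo
      rw [Iic_union_Ioo_eq_Iio hlt] at h
      linarith
    rcases lt_or_eq_of_le hβα with hβlt | hβeq
    · -- atom case: β < α ≤ c t
      have hlow : g x * (F (Ioo x t)).toReal ≤ ∫ y in Ioo x t, g y ∂F :=
        const_le_int hgint measurableSet_Ioo (fun y hy => (hg hy.1).le)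
      rw [hIoo] at hlow
      have hfact : 0 < (g t - g x) * (α - (F (Iio t)).toReal) :=
        mul_pos (sub_pos.2 (hg hlt)) (sub_pos.2 hβlt)
      have hatom' : g t * (F {t}).toReal
          = g t * (F (Iic t)).toReal - g t * (F (Iio t)).toReal := by
        rw [hatom]; ring
      nlinarith [hg hlt]
    · -- continuous case: β = α; use midpoint
      set s : ℝ := (x + t) / 2 with hs
      have hxs : x < s := by simp only [hs]; linarith
      have hst : s < t := by simp only [hs]; linarith
      have hcs : (F (Iic s)).toReal < α := c_lt_alpha_of_lt hα hst
      have hsplit3 : (∫ y in Ioo x t, g y ∂F)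
          = (∫ y in Ioc x s, g y ∂F) + ∫ y in Ioo s t, g y ∂F := by
        rw [← int_split hgint (by
            rw [Set.disjoint_left]; rintro a ha ha2; exact absurd ha2.1 (not_lt.2 ha.2))
          measurableSet_Ioo, Ioc_union_Ioo_eq_Ioo hxs.le hst]
      have hm1 : (F (Ioc x s)).toReal = (F (Iic s)).toReal - (F (Iic x)).toReal := by
        have h := measure_toReal_union (F := F) (s := Iic x) (u := Ioc x s)
          (Iic_disjoint_Ioc le_rfl) measurableSet_Ioc
        rw [Iic_union_Ioc_eq_Iic hxs.le] at h
        linarith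
      have hm2 : (F (Ioo s t)).toReal = (F (Iio t)).toReal - (F (Iic s)).toReal := by
        have h := measure_toReal_union (F := F) (s := Iic s) (u := Ioo s t)
          (by rw [Set.disjoint_left]; rintro a ha ha2; exact absurd ha2.1 (not_lt.2 ha))
          measurableSet_Ioo
        rw [Iic_union_Ioo_eq_Iio hst] at h
        linarith
      have hlow1 : g x * (F (Ioc x s)).toReal ≤ ∫ y in Ioc x s, g y ∂F :=
        const_le_int hgint measurableSet_Ioc (fun y hy => (hg hy.1).le)
      have hlow2 : g s * (F (Ioo s t)).toReal ≤ ∫ y in Ioo s t, g y ∂F :=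
        const_le_int hgint measurableSet_Ioo (fun y hy => (hg hy.1).le)
      rw [hm1] at hlow1
      rw [hm2] at hlow2
      have hfact : 0 < (g s - g x) * (α - (F (Iic s)).toReal) :=
        mul_pos (sub_pos.2 (hg hxs)) (sub_pos.2 hcs)
      have hatom' : g t * (F {t}).toReal
          = g t * (F (Iic t)).toReal - g t * (F (Iio t)).toReal := by
        rw [hatom]; ring
      nlinarith [hg hst, hg hxs]
  · -- t < x
    have hsplit : (∫ y in Iic x, g y ∂F)
        = (∫ y in Iic t, g y ∂F) + ∫ y in Ioc t x, g y ∂F := by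
      rw [← int_split hgint (Iic_disjoint_Ioc le_rfl) measurableSet_Ioc,
        Iic_union_Ioc_eq_Iic hgt.le]
    rw [hsplit]
    have hm : (F (Ioc t x)).toReal = (F (Iic x)).toReal - (F (Iic t)).toReal := by
      have h := measure_toReal_union (F := F) (s := Iic t) (u := Ioc t x)
        (Iic_disjoint_Ioc le_rfl) measurableSet_Ioc
      rw [Iic_union_Ioc_eq_Iic hgt.le] at h
      linarith
    rcases lt_or_eq_of_le hct with hctlt | hcteq
    · have hup : ∫ y in Ioc t x, g y ∂F ≤ g x * (F (Ioc t x)).toReal :=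
        int_le_const hgint measurableSet_Ioc (fun y hy => hg.monotone hy.2)
      rw [hm] at hup
      have hfact : 0 < (g x - g t) * ((F (Iic t)).toReal - α) :=
        mul_pos (sub_pos.2 (hg hgt)) (sub_pos.2 hctlt)
      nlinarith [hg hgt]
    · set s : ℝ := (t + x) / 2 with hs
      have hts : t < s := by simp only [hs]; linarith
      have hsx : s < x := by simp only [hs]; linarith
      have hcs : α < (F (Iic s)).toReal := alpha_lt_c_of_gt hα huniq hts
      have hsplit2 : (∫ y in Ioc t x, g y ∂F)
          = (∫ y in Ioc t s, g y ∂F) + ∫ y in Ioc s x, g y ∂F := by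
        rw [← int_split hgint (by
            rw [Set.disjoint_left]; rintro a ha ha2; exact absurd ha2.1 (not_lt.2 ha.2))
          measurableSet_Ioc, Ioc_union_Ioc_eq_Ioc hts.le hsx.le]
      have hm1 : (F (Ioc t s)).toReal = (F (Iic s)).toReal - (F (Iic t)).toReal := by
        have h := measure_toReal_union (F := F) (s := Iic t) (u := Ioc t s)
          (Iic_disjoint_Ioc le_rfl) measurableSet_Ioc
        rw [Iic_union_Ioc_eq_Iic hts.le] at h
        linarith
      have hm2 : (F (Ioc s x)).toReal = (F (Iic x)).toReal - (F (Iic s)).toReal := by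
        have h := measure_toReal_union (F := F) (s := Iic s) (u := Ioc s x)
          (Iic_disjoint_Ioc le_rfl) measurableSet_Ioc
        rw [Iic_union_Ioc_eq_Iic hsx.le] at h
        linarith
      have hup1 : ∫ y in Ioc t s, g y ∂F ≤ g s * (F (Ioc t s)).toReal :=
        int_le_const hgint measurableSet_Ioc (fun y hy => hg.monotone hy.2)
      have hup2 : ∫ y in Ioc s x, g y ∂F ≤ g x * (F (Ioc s x)).toReal :=
        int_le_const hgint measurableSet_Ioc (fun y hy => hg.monotone hy.2)
      rw [hm1] at hup1
      rw [hm2] at hup2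
      have hfact : 0 < (g x - g s) * ((F (Iic s)).toReal - α) :=
        mul_pos (sub_pos.2 (hg hsx)) (sub_pos.2 hcs)
      nlinarith [hg hts, hg hsx]

end key


/-- Strict consistency of the generalized pinball scoring function for the α-quantile. -/
theorem quantile_elicitable (α : ℝ) (hα : α ∈ Set.Ioo (0:ℝ) 1)
    (𝓕 : Set (Measure ℝ)) (hprob : ∀ F ∈ 𝓕, IsProbabilityMeasure F)
    (huniq : ∀ F ∈ 𝓕, lowerQuantile F α = upperQuantile F α)
    (g : ℝ → ℝ) (hg : StrictMono g) (hgint : ∀ F ∈ 𝓕, Integrable g F) :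
    (∀ x : ℝ, ∀ F ∈ 𝓕,
        ∫ y, ((if y ≤ lowerQuantile F α then (1:ℝ) else 0) - α) *
            (g (lowerQuantile F α) - g y) ∂F
          ≤ ∫ y, ((if y ≤ x then (1:ℝ) else 0) - α) * (g x - g y) ∂F) ∧
    (∀ x : ℝ, ∀ F ∈ 𝓕,
        ∫ y, ((if y ≤ x then (1:ℝ) else 0) - α) * (g x - g y) ∂F
          = ∫ y, ((if y ≤ lowerQuantile F α then (1:ℝ) else 0) - α) *
              (g (lowerQuantile F α) - g y) ∂F
        → x = lowerQuantile F α) := by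
  constructor
  · intro x F hF
    have := hprob F hF
    by_cases hx : x = lowerQuantile F α
    · subst hx; exact le_refl _
    · exact (score_lt hα (huniq F hF) hg (hgint F hF) hx).le
  · intro x F hF heq
    have := hprob F hF
    by_contra hx
    exact absurd heq (ne_of_gt (score_lt hα (huniq F hF) hg (hgint F hF) hx))
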